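/- Let L be a field with an additive valuation v, and let q ≥ 2 and N ≥ 0 be integers. Let s = ∑_{i≥0} s_i t^i be a formal power series over L with s_0 ≠ 0, v(s_i) ≥ 0 for all i, and v(s_0) < q^N. Let b = ∑_{i≥0} b_i t^i be a formal power series over L such that for every i, either b_i = 0 or v(b_i) is an integer multiple of q^N. If c is an integer such that c · q^N ≤ v((s·b)_i) for every coefficient (s·b)_i of the product s·b (with the convention v(0) = ∞), then c · q^N ≤ v(b_i) for all i. -/

import Mathlib

private lemma val_sum {L : Type*} [Field L] (v : L → EReal)
    (hv_top : ∀ x : L, v x = ⊤ ↔ x = 0)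
    (hv_add : ∀ x y : L, min (v x) (v y) ≤ v (x + y))
    {ι : Type*} (M : EReal) (t : Finset ι) (f : ι → L)
    (h : ∀ x ∈ t, M ≤ v (f x)) : M ≤ v (∑ x ∈ t, f x) := by
  classical
  induction t using Finset.cons_induction with
  | empty => simp [(hv_top 0).mpr rfl]
  | cons a t ha ih =>
    rw [Finset.sum_cons]
    refine le_trans ?_ (hv_add _ _)
    exact le_min (h a (Finset.mem_cons_self a t))
      (ih fun x hx => h x (Finset.mem_cons_of_mem hx))

theorem stmt5 {L : Type*} [Field L] (v : L → EReal)
    (hv_top : ∀ x : L, v x = ⊤ ↔ x = 0)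
    (hv_bot : ∀ x : L, v x ≠ ⊥)
    (hv_mul : ∀ x y : L, v (x * y) = v x + v y)
    (hv_add : ∀ x y : L, min (v x) (v y) ≤ v (x + y))
    (q N : ℕ) (hq : 2 ≤ q)
    (s b : PowerSeries L)
    (hs0 : PowerSeries.coeff (R := L) 0 s ≠ 0)
    (hs_nonneg : ∀ i : ℕ, (0 : EReal) ≤ v (PowerSeries.coeff (R := L) i s))
    (hs0_lt : v (PowerSeries.coeff (R := L) 0 s) < (((q : ℝ) ^ N : ℝ) : EReal))
    (hb : ∀ i : ℕ, PowerSeries.coeff (R := L) i b = 0 ∨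
      ∃ k : ℤ, v (PowerSeries.coeff (R := L) i b) = (((k : ℝ) * (q : ℝ) ^ N : ℝ) : EReal))
    (c : ℤ)
    (hc : ∀ i : ℕ,
      (((c : ℝ) * (q : ℝ) ^ N : ℝ) : EReal) ≤ v (PowerSeries.coeff (R := L) i (s * b))) :
    ∀ i : ℕ, (((c : ℝ) * (q : ℝ) ^ N : ℝ) : EReal) ≤ v (PowerSeries.coeff (R := L) i b) := by
  -- basic facts
  have hv1 : v 1 = 0 := by
    have h := hv_mul 1 1
    rw [mul_one] at h
    have ht : v 1 ≠ ⊤ := by simp only [ne_eq, hv_top]; exact one_ne_zero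
    lift v 1 to ℝ using ⟨ht, hv_bot 1⟩ with r hr
    rw [← EReal.coe_add, EReal.coe_eq_coe_iff] at h
    norm_cast
    linarith
  have hvneg : ∀ x : L, v (-x) = v x := by
    intro x
    have h := hv_mul (-1) (-1)
    rw [neg_mul_neg, one_mul, hv1] at h
    have ht : v (-1 : L) ≠ ⊤ := by simp only [ne_eq, hv_top]; simp
    have hneg1 : v (-1 : L) = 0 := by
      lift v (-1 : L) to ℝ using ⟨ht, hv_bot _⟩ with r hr
      rw [← EReal.coe_add] at h
      norm_cast at h ⊢
      linarith
    have := hv_mul (-1) x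
    rw [neg_one_mul, hneg1, zero_add] at this
    exact this
  intro i
  induction i using Nat.strong_induction_on with
  | _ i ih =>
  set M : EReal := (((c : ℝ) * (q : ℝ) ^ N : ℝ) : EReal) with hM
  -- M ≤ v (s_0 * b_i)
  have key : M ≤ v (PowerSeries.coeff (R := L) 0 s * PowerSeries.coeff (R := L) i b) := by
    have hcoeff : PowerSeries.coeff (R := L) 0 s * PowerSeries.coeff (R := L) i b =
        PowerSeries.coeff (R := L) i (s * b) +
          (- ∑ p ∈ (Finset.HasAntidiagonal.antidiagonal i).filter (fun p => p.1 ≠ 0),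
              PowerSeries.coeff (R := L) p.1 s * PowerSeries.coeff (R := L) p.2 b) := by
      rw [PowerSeries.coeff_mul]
      rw [← Finset.sum_filter_add_sum_filter_not (Finset.HasAntidiagonal.antidiagonal i) (fun p => p.1 ≠ 0)]
      have : (Finset.HasAntidiagonal.antidiagonal i).filter (fun p => ¬ p.1 ≠ 0) = {(0, i)} := by
        ext p
        simp only [Finset.mem_filter, Finset.mem_antidiagonal, Finset.mem_singleton, not_not]
        constructor
        · rintro ⟨h1, h2⟩; cases p; simp_all
        · rintro rfl; simp
      rw [this, Finset.sum_singleton]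
      ring
    rw [hcoeff]
    refine le_trans (le_min (hc i) ?_) (hv_add _ _)
    rw [hvneg]
    apply val_sum v hv_top hv_add
    rintro ⟨j, l⟩ hp
    simp only [Finset.mem_filter, Finset.HasAntidiagonal.mem_antidiagonal] at hp
    obtain ⟨hjl, hj⟩ := hp
    rw [hv_mul]
    have hl : l < i := by omega
    have h1 := hs_nonneg j
    have h2 := ih l hl
    calc M = 0 + M := by rw [zero_add]
    _ ≤ v (PowerSeries.coeff (R := L) j s) + v (PowerSeries.coeff (R := L) l b) := by
        exact add_le_add h1 h2
  -- now deduce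
  rcases hb i with h0 | ⟨k, hk⟩
  · rw [h0, (hv_top 0).mpr rfl]; exact le_top
  · rw [hv_mul, hk] at key
    rw [hk]
    have hst : v (PowerSeries.coeff (R := L) 0 s) ≠ ⊤ := by simp only [ne_eq, hv_top]; exact hs0
    lift v (PowerSeries.coeff (R := L) 0 s) to ℝ using ⟨hst, hv_bot _⟩ with r hr
    rw [← EReal.coe_add, EReal.coe_le_coe_iff] at key
    rw [EReal.coe_le_coe_iff]
    have hr0 : (0 : ℝ) ≤ r := by
      have := hs_nonneg 0
      rw [← hr] at this
      exact_mod_cast this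
    have hrq : r < (q : ℝ) ^ N := by exact_mod_cast hs0_lt
    have hqpos : (0 : ℝ) < (q : ℝ) ^ N := by positivity
    have hck : (c : ℝ) - 1 < (k : ℝ) := by
      nlinarith
    have hck' : c - 1 < k := by exact_mod_cast (by push_cast; linarith : ((c - 1 : ℤ) : ℝ) < (k : ℝ))
    have hle : (c : ℝ) ≤ (k : ℝ) := by exact_mod_cast (by omega : c ≤ k)
    nlinarith
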